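/- arXiv:1306.6502 — 4 statements merged into one kernel-verified Lean document; each statement's English description precedes it below -/
import Mathlib

section
/- Let a(t) = sin(log(log(e/t)))/(1 + log(log(e/t))) for t ∈ (0,1]. Then for every s with 0 < s < 1, the integral ∫₀ˢ |a'(t)| dt diverges (equals +∞). -/
open Real MeasureTheory Set

noncomputable def a (t : ℝ) : ℝ :=
  Real.sin (Real.log (Real.log (Real.exp 1 / t))) /
    (1 + Real.log (Real.log (Real.exp 1 / t)))

/-- The inverse substitution: `T v = exp (1 - exp v)`. -/
noncomputable def T (v : ℝ) : ℝ := Real.exp (1 - Real.exp v)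

lemma T_pos (v : ℝ) : 0 < T v := Real.exp_pos _

lemma log_log_T (v : ℝ) : Real.log (Real.log (Real.exp 1 / T v)) = v := by
  have h1 : Real.exp 1 / T v = Real.exp (Real.exp v) := by
    rw [T, ← Real.exp_sub]; ring_nf
  rw [h1, Real.log_exp, Real.log_exp]

lemma a_T (v : ℝ) : a (T v) = Real.sin v / (1 + v) := by
  rw [a, log_log_T]

lemma T_lt_one {v : ℝ} (hv : 0 < v) : T v < 1 := by
  rw [T, ← Real.exp_zero]
  apply Real.exp_lt_exp.2
  have h := Real.add_one_lt_exp (ne_of_gt hv)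
  simp [Real.exp_zero]
  linarith

lemma T_strictAnti : StrictAnti T := by
  intro x y hxy
  exact Real.exp_lt_exp.2 (by linarith [Real.exp_lt_exp.2 hxy])

lemma T_lt {v s : ℝ} (hs : 0 < s) (hv : Real.log (1 - Real.log s) < v) : T v < s := by
  have h2 : 1 - Real.log s < Real.exp v := by
    rcases le_or_gt (1 - Real.log s) 0 with h | h
    · exact lt_of_le_of_lt h (Real.exp_pos v)
    · calc 1 - Real.log s = Real.exp (Real.log (1 - Real.log s)) := (Real.exp_log h).symm
        _ < Real.exp v := Real.exp_lt_exp.2 hv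
  rw [T, ← Real.exp_log hs]
  exact Real.exp_lt_exp.2 (by linarith)

lemma log_ediv_gt_one {t : ℝ} (ht0 : 0 < t) (ht1 : t < 1) :
    1 < Real.log (Real.exp 1 / t) := by
  rw [Real.log_div (Real.exp_ne_zero 1) (ne_of_gt ht0), Real.log_exp]
  have : Real.log t < 0 := Real.log_neg ht0 ht1
  linarith

lemma a_diff {t : ℝ} (ht0 : 0 < t) (ht1 : t < 1) : DifferentiableAt ℝ a t := by
  have h1 : (0:ℝ) < Real.exp 1 / t := div_pos (Real.exp_pos 1) ht0
  have h2 : 1 < Real.log (Real.exp 1 / t) := log_ediv_gt_one ht0 ht1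
  have h3 : 0 < Real.log (Real.log (Real.exp 1 / t)) := Real.log_pos h2
  have hd1 : DifferentiableAt ℝ (fun t : ℝ => Real.exp 1 / t) t :=
    (differentiableAt_const _).div differentiableAt_id (ne_of_gt ht0)
  have hd2 : DifferentiableAt ℝ (fun t : ℝ => Real.log (Real.exp 1 / t)) t :=
    hd1.log (ne_of_gt h1)
  have hd3 : DifferentiableAt ℝ (fun t : ℝ => Real.log (Real.log (Real.exp 1 / t))) t :=
    hd2.log (by positivity)
  exact hd3.sin.div ((differentiableAt_const 1).add hd3) (by positivity)

lemma key {c d : ℝ} (hc : 0 < c) (hd : d < 1) (hcd : c < d) :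
    ENNReal.ofReal |a d - a c| ≤ ∫⁻ t in Set.Ioo c d, ENNReal.ofReal |deriv a t| := by
  by_cases htop : ∫⁻ t in Set.Ioo c d, ENNReal.ofReal |deriv a t| = ⊤
  · rw [htop]; exact le_top
  have hmeas : Measurable (deriv a) := measurable_deriv a
  have hint : IntegrableOn (deriv a) (Set.Ioo c d) := by
    refine ⟨hmeas.aestronglyMeasurable, ?_⟩
    rw [HasFiniteIntegral]
    simp_rw [Real.enorm_eq_ofReal_abs]
    exact lt_top_iff_ne_top.2 htop
  have hii : IntervalIntegrable (deriv a) volume c d := by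
    rw [intervalIntegrable_iff_integrableOn_Ioo_of_le hcd.le]; exact hint
  have hderiv : ∀ x ∈ Set.uIcc c d, HasDerivAt a (deriv a x) x := by
    intro x hx
    rw [Set.uIcc_of_le hcd.le] at hx
    exact (a_diff (lt_of_lt_of_le hc hx.1) (lt_of_le_of_lt hx.2 hd)).hasDerivAt
  have hftc : ∫ x in c..d, deriv a x = a d - a c :=
    intervalIntegral.integral_eq_sub_of_hasDerivAt hderiv hii
  have h1 : |a d - a c| ≤ ∫ x in Set.Ioo c d, |deriv a x| := by
    rw [← hftc]
    refine (intervalIntegral.abs_integral_le_integral_abs hcd.le).trans_eq ?_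
    rw [intervalIntegral.integral_of_le hcd.le, integral_Ioc_eq_integral_Ioo]
  calc ENNReal.ofReal |a d - a c| ≤ ENNReal.ofReal (∫ x in Set.Ioo c d, |deriv a x|) :=
        ENNReal.ofReal_le_ofReal h1
    _ = ∫⁻ t in Set.Ioo c d, ENNReal.ofReal |deriv a t| :=
        ofReal_integral_eq_lintegral_ofReal hint.abs
          (Filter.Eventually.of_forall fun x => abs_nonneg _)

set_option maxHeartbeats 1000000 in
theorem stmt_0 (s : ℝ) (hs0 : 0 < s) (hs1 : s < 1) :
    ∫⁻ t in Set.Ioo (0 : ℝ) s, ENNReal.ofReal |deriv a t| = ⊤ := by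
  set N : ℕ := ⌈Real.log (1 - Real.log s)⌉₊ with hN
  set w : ℕ → ℝ := fun n => ((N : ℝ) + n) * π + π / 2 with hw
  set f : ℕ → ℝ := fun n => T (w n) with hf
  have hpi : (3 : ℝ) < π := Real.pi_gt_three
  have hw_pos : ∀ n, 0 < w n := by
    intro n
    have : (0:ℝ) ≤ (N:ℝ) + n := by positivity
    simp only [hw]
    nlinarith
  have hw_mono : ∀ n, w n < w (n + 1) := by
    intro n; simp only [hw]; push_cast; nlinarith
  have hw_succ : ∀ n, w (n + 1) = w n + π := by
    intro n; simp only [hw]; push_cast; ring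
  have hwlt : ∀ n, Real.log (1 - Real.log s) < w n := by
    intro n
    have h1 : Real.log (1 - Real.log s) ≤ (N : ℝ) := Nat.le_ceil _
    have h2 : (0:ℝ) ≤ (N:ℝ) + n := by positivity
    have h3 : (N:ℝ) ≤ (N:ℝ) + n := le_add_of_nonneg_right (Nat.cast_nonneg n)
    simp only [hw]
    nlinarith
  have hf_pos : ∀ n, 0 < f n := fun n => T_pos _
  have hf_lt_one : ∀ n, f n < 1 := fun n => T_lt_one (hw_pos n)
  have hf_lt_s : ∀ n, f n < s := fun n => T_lt hs0 (hwlt n)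
  have hf_anti : StrictAnti f := fun m n hmn =>
    T_strictAnti (by
      have : ∀ k l, k < l → w k < w l := fun k l hkl => by
        simp only [hw]; push_cast
        have : (k:ℝ) < l := by exact_mod_cast hkl
        nlinarith
      exact this m n hmn)
  have hsin : ∀ n, |Real.sin (w n)| = 1 := by
    intro n
    have : w n = ((N + n : ℕ) : ℝ) * π + π / 2 := by simp only [hw]; push_cast; ring
    rw [this, Real.sin_add_pi_div_two]
    have := Real.abs_cos_int_mul_pi ((N + n : ℕ) : ℤ)
    push_cast at this ⊢
    exact this
  have hsin_succ : ∀ n, Real.sin (w (n + 1)) = -Real.sin (w n) := by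
    intro n; rw [hw_succ, Real.sin_add_pi]
  have hval : ∀ n, a (f n) = Real.sin (w n) / (1 + w n) := fun n => a_T _
  -- lower bound on the jumps
  have hjump : ∀ n, 1 / (1 + w (n + 1)) ≤ |a (f n) - a (f (n + 1))| := by
    intro n
    rw [abs_sub_comm, hval, hval, hsin_succ]
    have h1 : (0:ℝ) < 1 + w n := by linarith [hw_pos n]
    have h2 : (0:ℝ) < 1 + w (n + 1) := by linarith [hw_pos (n + 1)]
    have : -Real.sin (w n) / (1 + w (n + 1)) - Real.sin (w n) / (1 + w n)
        = -(Real.sin (w n) * (1 / (1 + w (n + 1)) + 1 / (1 + w n))) := by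
      field_simp; ring
    rw [this, abs_neg, abs_mul, hsin, one_mul,
      abs_of_pos (by positivity : (0:ℝ) < 1 / (1 + w (n + 1)) + 1 / (1 + w n))]
    have : (0:ℝ) < 1 / (1 + w n) := by positivity
    linarith
  -- each jump is bounded by the lintegral over the corresponding interval
  have hkey : ∀ n, ENNReal.ofReal (1 / (1 + w (n + 1)))
      ≤ ∫⁻ t in Set.Ioo (f (n + 1)) (f n), ENNReal.ofReal |deriv a t| := by
    intro n
    refine (ENNReal.ofReal_le_ofReal (hjump n)).trans ?_
    exact key (hf_pos (n + 1)) (hf_lt_one n) (hf_anti (Nat.lt_succ_self n))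
  -- divergence of the sum
  have hdiv : ∑' n, ENNReal.ofReal (1 / (1 + w (n + 1))) = ⊤ := by
    by_contra h
    have hsum : Summable fun n => (ENNReal.ofReal (1 / (1 + w (n + 1)))).toReal :=
      ENNReal.summable_toReal h
    have hsum2 : Summable fun n : ℕ => 1 / (1 + w (n + 1)) := by
      refine hsum.congr fun n => ?_
      rw [ENNReal.toReal_ofReal (by positivity : (0:ℝ) ≤ 1 / (1 + w (n + 1)))]
    have hcomp : ∀ n : ℕ, 1 / (π * ((n : ℝ) + (N + 3))) ≤ 1 / (1 + w (n + 1)) := by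
      intro n
      have h1 : (0:ℝ) < 1 + w (n + 1) := by linarith [hw_pos (n + 1)]
      apply one_div_le_one_div_of_le h1
      simp only [hw]; push_cast; nlinarith
    have hsum3 : Summable fun n : ℕ => 1 / (π * ((n : ℝ) + (N + 3))) := by
      refine Summable.of_nonneg_of_le (fun n => by positivity) hcomp hsum2
    have hsum4 : Summable fun n : ℕ => 1 / ((n : ℝ) + (N + 3)) := by
      have := hsum3.mul_left π
      refine this.congr fun n => ?_
      field_simp
    have hsum5 : Summable fun n : ℕ => 1 / ((n : ℝ)) := by
      refine (summable_nat_add_iff (N + 3)).1 ?_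
      refine hsum4.congr fun n => ?_
      push_cast
      ring_nf
    exact Real.not_summable_one_div_natCast hsum5
  -- assemble
  rw [eq_top_iff]
  calc (⊤ : ENNReal) = (∑' n, ENNReal.ofReal (1 / (1 + w (n + 1)))) := hdiv.symm
    _ ≤ (∑' n, ∫⁻ t in Set.Ioo (f (n + 1)) (f n), ENNReal.ofReal |deriv a t|) :=
        ENNReal.tsum_le_tsum hkey
    _ = ∫⁻ t in ⋃ n, Set.Ioo (f (n + 1)) (f n), ENNReal.ofReal |deriv a t| := by
        refine (lintegral_iUnion (fun n => measurableSet_Ioo) ?_ _).symm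
        intro m n hmn
        rcases hmn.lt_or_gt with h | h
        · refine Set.disjoint_iff_inter_eq_empty.2 ?_
          rw [Set.Ioo_inter_Ioo, Set.Ioo_eq_empty]
          intro hcon
          have : f n ≤ f (m + 1) := hf_anti.antitone h
          simp only [lt_min_iff, max_lt_iff] at hcon
          linarith [hcon.1.2, hcon.2.1]
        · refine Set.disjoint_iff_inter_eq_empty.2 ?_
          rw [Set.Ioo_inter_Ioo, Set.Ioo_eq_empty]
          intro hcon
          have : f m ≤ f (n + 1) := hf_anti.antitone h
          simp only [lt_min_iff, max_lt_iff] at hcon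
          linarith [hcon.1.1, hcon.2.2]
    _ ≤ ∫⁻ t in Set.Ioo (0 : ℝ) s, ENNReal.ofReal |deriv a t| := by
        refine lintegral_mono_set (Set.iUnion_subset fun n => ?_)
        exact Set.Ioo_subset_Ioo (hf_pos (n + 1)).le (hf_lt_s n).le
end

section
/- Let a(t) = sin(log(log(e/t)))/(1 + log(log(e/t))) for t ∈ (0,1]. Then for every integer n ≥ 2, the integral ∫₀¹ |a'(t)|ⁿ t^(n-1) dt is finite. -/
open Real MeasureTheory Set

/-- Antiderivative of the bounding function, extended by 0 at 0. -/
noncomputable def Fb (t : ℝ) : ℝ := if t = 0 then 0 else (1 - Real.log t)⁻¹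

lemma Fb_hasDerivAt {t : ℝ} (ht : t ∈ Set.Ioo (0:ℝ) 1) :
    HasDerivAt Fb ((t * (1 - Real.log t)^2)⁻¹) t := by
  have ht0 := ht.1
  have hg : (0:ℝ) < 1 - Real.log t := by
    have : Real.log t < 0 := Real.log_neg ht0 ht.2
    linarith
  have h1 : HasDerivAt (fun t => 1 - Real.log t) (-t⁻¹) t :=
    (Real.hasDerivAt_log ht0.ne').const_sub 1
  have h2 := h1.inv hg.ne'
  have h3 : -(-t⁻¹) / (1 - Real.log t)^2 = (t * (1 - Real.log t)^2)⁻¹ := by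
    field_simp
  rw [h3] at h2
  apply h2.congr_of_eventuallyEq
  filter_upwards [eventually_ne_nhds ht0.ne'] with x hx
  simp [Fb, hx]

lemma Fb_contOn : ContinuousOn Fb (Set.Icc (0:ℝ) 1) := by
  intro t ht
  rcases eq_or_ne t 0 with rfl | ht0
  · have h1 : Filter.Tendsto (fun x : ℝ => (1 - Real.log x)⁻¹) (nhdsWithin 0 (Set.Ioi 0))
        (nhds 0) := by
      apply Filter.Tendsto.inv_tendsto_atTop
      have : Filter.Tendsto (fun x : ℝ => 1 + -Real.log x) (nhdsWithin 0 (Set.Ioi 0))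
          Filter.atTop :=
        Filter.tendsto_atTop_add_const_left _ 1
          (Filter.tendsto_neg_atTop_iff.mpr Real.tendsto_log_nhdsGT_zero)
      simpa [sub_eq_add_neg] using this
    have h2 : Filter.Tendsto Fb (nhdsWithin 0 (Set.Ioi 0)) (nhds 0) := by
      apply h1.congr'
      filter_upwards [self_mem_nhdsWithin] with x hx
      simp [Fb, (ne_of_gt (Set.mem_Ioi.mp hx))]
    have h3 : ContinuousWithinAt Fb (Set.Ioi 0) 0 := by
      simpa [ContinuousWithinAt, Fb] using h2
    exact (continuousWithinAt_Ioi_iff_Ici.mp h3).mono Set.Icc_subset_Ici_self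
  · have hpos : 0 < t := lt_of_le_of_ne ht.1 (Ne.symm ht0)
    have hg : 1 - Real.log t ≠ 0 := by
      have : Real.log t ≤ 0 := Real.log_nonpos hpos.le ht.2
      intro h; linarith
    have : ContinuousAt Fb t := by
      have hc : ContinuousAt (fun x => (1 - Real.log x)⁻¹) t :=
        ((continuousAt_const.sub (Real.continuousAt_log ht0)).inv₀ hg)
      apply hc.congr
      filter_upwards [eventually_ne_nhds ht0] with x hx
      simp [Fb, hx]
    exact this.continuousWithinAt

lemma deriv_a_bound {t : ℝ} (ht : t ∈ Set.Ioo (0:ℝ) 1) :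
    |deriv a t| * (t * (1 - Real.log t)) ≤ 2 ∧ 1 ≤ 1 - Real.log t := by
  have ht0 := ht.1
  have hlt : Real.log t < 0 := Real.log_neg ht0 ht.2
  have hg1 : (1:ℝ) ≤ 1 - Real.log t := by linarith
  have hg : (0:ℝ) < 1 - Real.log t := by linarith
  set L : ℝ := Real.log (1 - Real.log t) with hLdef
  have hL0 : 0 ≤ L := Real.log_nonneg hg1
  have h1 : HasDerivAt (fun t => 1 - Real.log t) (-t⁻¹) t :=
    (Real.hasDerivAt_log ht0.ne').const_sub 1
  have hL : HasDerivAt (fun t => Real.log (1 - Real.log t)) (-t⁻¹ / (1 - Real.log t)) t :=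
    h1.log hg.ne'
  set L' : ℝ := -t⁻¹ / (1 - Real.log t) with hL'def
  have hnum : HasDerivAt (fun t => Real.sin (Real.log (1 - Real.log t)))
      (Real.cos L * L') t := by
    exact (Real.hasDerivAt_sin L).comp t hL
  have hden : HasDerivAt (fun t => 1 + Real.log (1 - Real.log t)) L' t := hL.const_add 1
  have hdne : 1 + L ≠ 0 := by positivity
  have hdiv := hnum.div hden hdne
  set D : ℝ := (Real.cos L * L' * (1 + L) - Real.sin L * L') / (1 + L)^2 with hD
  have hda : HasDerivAt a D t := by
    apply hdiv.congr_of_eventuallyEq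
    filter_upwards [eventually_ne_nhds ht0.ne'] with x hx
    have : Real.log (Real.exp 1 / x) = 1 - Real.log x := by
      rw [Real.log_div (Real.exp_ne_zero 1) hx, Real.log_exp]
    simp [a, this]
  have hDeq : deriv a t = D := hda.deriv
  refine ⟨?_, hg1⟩
  rw [hDeq]
  have habsL' : |L'| = (t * (1 - Real.log t))⁻¹ := by
    rw [hL'def, abs_div, abs_neg, abs_inv, abs_of_pos ht0, abs_of_pos hg,
      div_eq_mul_inv, ← mul_inv]
  have hnum_bd : |Real.cos L * (1 + L) - Real.sin L| ≤ 2 * (1 + L) := by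
    have h1 : |Real.cos L * (1 + L)| ≤ 1 + L := by
      rw [abs_mul, abs_of_pos (by positivity : (0:ℝ) < 1 + L)]
      nlinarith [Real.abs_cos_le_one L]
    have h2 : |Real.sin L| ≤ 1 := Real.abs_sin_le_one L
    calc |Real.cos L * (1 + L) - Real.sin L| ≤ |Real.cos L * (1 + L)| + |Real.sin L| :=
          abs_sub _ _
    _ ≤ (1 + L) + 1 := add_le_add h1 h2
    _ ≤ 2 * (1 + L) := by linarith
  have hDabs : |D| ≤ 2 * (t * (1 - Real.log t))⁻¹ := by
    have : D = L' * (Real.cos L * (1 + L) - Real.sin L) / (1 + L)^2 := by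
      rw [hD]; ring
    rw [this, abs_div, abs_mul, habsL']
    have h1L : (1:ℝ) ≤ (1 + L)^2 := by nlinarith
    have habs : |(1 + L)^2| = (1+L)^2 := abs_of_pos (by positivity)
    rw [habs]
    calc (t * (1 - Real.log t))⁻¹ * |Real.cos L * (1 + L) - Real.sin L| / (1 + L)^2
        ≤ (t * (1 - Real.log t))⁻¹ * (2 * (1 + L)) / (1 + L)^2 := by
          apply div_le_div_of_nonneg_right _ (by positivity)
          exact mul_le_mul_of_nonneg_left hnum_bd (by positivity)
      _ ≤ 2 * (t * (1 - Real.log t))⁻¹ := by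
          rw [div_le_iff₀ (by positivity)]
          have : (1 + L) ≤ (1+L)^2 := by nlinarith
          have htg : (0:ℝ) ≤ (t * (1 - Real.log t))⁻¹ := by positivity
          nlinarith
  calc |D| * (t * (1 - Real.log t)) ≤ 2 * (t * (1 - Real.log t))⁻¹ * (t * (1 - Real.log t)) :=
        mul_le_mul_of_nonneg_right hDabs (by positivity)
    _ = 2 := by field_simp

theorem stmt_1 (n : ℕ) (hn : 2 ≤ n) :
    ∫⁻ t in Set.Ioo (0 : ℝ) 1,
      ENNReal.ofReal (|deriv a t| ^ n * t ^ (n - 1)) < ⊤ := by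
  set G : ℝ → ℝ := fun t => 2^n * (t * (1 - Real.log t)^2)⁻¹ with hGdef
  have hGmeas : Measurable fun t => ENNReal.ofReal (G t) := by
    apply ENNReal.measurable_ofReal.comp
    exact measurable_const.mul
      ((measurable_id.mul ((measurable_const.sub Real.measurable_log).pow_const 2)).inv)
  have hmono : ∫⁻ t in Set.Ioo (0 : ℝ) 1,
      ENNReal.ofReal (|deriv a t| ^ n * t ^ (n - 1)) ≤
      ∫⁻ t in Set.Ioo (0 : ℝ) 1, ENNReal.ofReal (G t) := by
    apply setLIntegral_mono hGmeas
    intro t ht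
    apply ENNReal.ofReal_le_ofReal
    obtain ⟨hb, hg1⟩ := deriv_a_bound ht
    have ht0 := ht.1
    have hg : (0:ℝ) < 1 - Real.log t := by linarith
    -- key: |deriv a t|^n * t^(n-1) * (t * (1 - log t)^2) ≤ 2^n
    have hkey : |deriv a t| ^ n * t ^ (n-1) * (t * (1 - Real.log t)^2) ≤ 2^n := by
      have h1 : (|deriv a t| * (t * (1 - Real.log t)))^n ≤ 2^n :=
        pow_le_pow_left₀ (by positivity) hb n
      have h2 : (1 - Real.log t)^2 ≤ (1 - Real.log t)^n := pow_le_pow_right₀ hg1 hn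
      have htn : t ^ (n-1) * t = t ^ n := by
        rw [← pow_succ]
        congr 1
        omega
      have h3 : |deriv a t| ^ n * t ^ (n-1) * (t * (1 - Real.log t)^2)
          = (|deriv a t| * t)^n * (1 - Real.log t)^2 := by
        rw [mul_pow]
        calc |deriv a t| ^ n * t ^ (n-1) * (t * (1 - Real.log t)^2)
            = |deriv a t| ^ n * (t ^ (n-1) * t) * (1 - Real.log t)^2 := by ring
          _ = |deriv a t| ^ n * t ^ n * (1 - Real.log t)^2 := by rw [htn]
      rw [h3]
      calc (|deriv a t| * t)^n * (1 - Real.log t)^2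
          ≤ (|deriv a t| * t)^n * (1 - Real.log t)^n := by
            apply mul_le_mul_of_nonneg_left h2 (by positivity)
        _ = (|deriv a t| * (t * (1 - Real.log t)))^n := by rw [← mul_pow, ← mul_assoc]
        _ ≤ 2^n := h1
    show |deriv a t| ^ n * t ^ (n - 1) ≤ 2^n * (t * (1 - Real.log t)^2)⁻¹
    have hpos : (0:ℝ) < t * (1 - Real.log t)^2 := by positivity
    calc |deriv a t| ^ n * t ^ (n - 1)
          = |deriv a t| ^ n * t ^ (n-1) * (t * (1 - Real.log t)^2) / (t * (1 - Real.log t)^2) := by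
            field_simp
      _ ≤ 2^n / (t * (1 - Real.log t)^2) := by
            exact div_le_div_of_nonneg_right hkey hpos.le
      _ = 2^n * (t * (1 - Real.log t)^2)⁻¹ := by rw [div_eq_mul_inv]
  have hInt : IntegrableOn G (Set.Ioo (0:ℝ) 1) := by
    have h1 : IntegrableOn (fun t => (t * (1 - Real.log t)^2)⁻¹) (Set.Ioc (0:ℝ) 1) :=
      intervalIntegral.integrableOn_deriv_of_nonneg Fb_contOn (fun x hx => Fb_hasDerivAt hx)
        (fun x hx => by
          have := hx.1
          have hg : (0:ℝ) < 1 - Real.log x := by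
            have := Real.log_neg hx.1 hx.2; linarith
          positivity)
    have h2 := (h1.mono_set Set.Ioo_subset_Ioc_self).smul (2^n : ℝ)
    simpa [hGdef, smul_eq_mul, Pi.smul_def, IntegrableOn] using h2
  refine lt_of_le_of_lt hmono ?_
  exact (lintegral_ofReal_le_lintegral_enorm G).trans_lt hInt.2
end

section
/- Let X be a metric space, V a normed space, and f : X → V a function admitting an upper gradient g (meaning ‖f(γ(b)) − f(γ(a))‖ ≤ ∫_γ g for all rectifiable curves γ : [a,b] → X) such that f is constant on a closed set E ⊂ X. Then h = g·χ_{X\E} is also an upper gradient of f. -/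
open Set MeasureTheory

/-- `g` is an upper gradient of `f` : for every rectifiable curve, parametrized by
arclength as a `1`-Lipschitz curve `γ : [a,b] → X`, the increment of `f` along the curve
is bounded by the line integral `∫_γ g`. -/
def IsUpperGradient {X V : Type*} [MetricSpace X] [NormedAddCommGroup V]
    (f : X → V) (g : X → ℝ) : Prop :=
  ∀ (a b : ℝ), a ≤ b → ∀ γ : ℝ → X, LipschitzWith 1 γ →
    ‖f (γ b) - f (γ a)‖ ≤ ∫ t in a..b, g (γ t)

theorem stmt_14 {X V : Type*} [MetricSpace X] [NormedAddCommGroup V]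
    (f : X → V) (g : X → ℝ) (hg0 : ∀ x, 0 ≤ g x)
    (hg : IsUpperGradient f g)
    (E : Set X) (hE : IsClosed E) (c : V) (hf : ∀ x ∈ E, f x = c) :
    IsUpperGradient f (Set.indicator Eᶜ g) := by
  intro a b hab γ hγ
  set h : ℝ → ℝ := fun t => Set.indicator Eᶜ g (γ t) with hh
  have hind : h = Set.indicator (γ ⁻¹' Eᶜ) (fun t => g (γ t)) := by
    funext t
    rfl
  have hnonneg : ∀ t, 0 ≤ h t := fun t => Set.indicator_nonneg (fun x _ => hg0 x) _
  by_cases hint : IntervalIntegrable (fun t => g (γ t)) volume a b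
  · have hmeas : MeasurableSet (γ ⁻¹' Eᶜ) :=
      (hE.isOpen_compl.preimage hγ.continuous).measurableSet
    have hinth : IntervalIntegrable h volume a b := by
      rw [hind]
      exact ⟨hint.1.indicator hmeas, hint.2.indicator hmeas⟩
    set S := Icc a b ∩ γ ⁻¹' E with hS
    by_cases hSne : S.Nonempty
    · have hScl : IsClosed S := isClosed_Icc.inter (hE.preimage hγ.continuous)
      have hScpt : IsCompact S :=
        (isCompact_Icc).inter_right (hE.preimage hγ.continuous)
      have hbdd : BddBelow S := hScpt.bddBelow
      have hbdd' : BddAbove S := hScpt.bddAbove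
      set a' := sInf S with ha'
      set b' := sSup S with hb'
      have ha'S : a' ∈ S := hScl.csInf_mem hSne hbdd
      have hb'S : b' ∈ S := hScl.csSup_mem hSne hbdd'
      have haa' : a ≤ a' := ha'S.1.1
      have hb'b : b' ≤ b := hb'S.1.2
      have ha'b' : a' ≤ b' := csInf_le_csSup hSne hbdd hbdd'
      have fca' : f (γ a') = c := hf _ ha'S.2
      have fcb' : f (γ b') = c := hf _ hb'S.2
      -- equality a.e. on [a, a']
      have hne : ∀ᵐ t : ℝ, t ≠ a' := by
        rw [MeasureTheory.ae_iff]
        simp only [ne_eq, not_not, setOf_eq_eq_singleton]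
        exact Real.volume_singleton
      have eq1 : ∫ t in a..a', g (γ t) = ∫ t in a..a', h t := by
        apply intervalIntegral.integral_congr_ae
        filter_upwards [hne] with t ht htmem
        rw [Set.uIoc_of_le haa'] at htmem
        have htE : γ t ∈ Eᶜ := by
          intro hmem
          have : t ∈ S := ⟨⟨le_of_lt htmem.1, le_trans (le_trans htmem.2 ha'b') hb'b⟩, hmem⟩
          exact ht (le_antisymm htmem.2 (csInf_le hbdd this))
        simp [hh, Set.indicator_of_mem htE]
      have eq2 : ∫ t in b'..b, g (γ t) = ∫ t in b'..b, h t := by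
        apply intervalIntegral.integral_congr_ae
        filter_upwards with t htmem
        rw [Set.uIoc_of_le hb'b] at htmem
        have htE : γ t ∈ Eᶜ := by
          intro hmem
          have : t ∈ S := ⟨⟨le_trans haa' (le_trans ha'b' (le_of_lt htmem.1)), htmem.2⟩, hmem⟩
          exact absurd (le_csSup hbdd' this) (not_le.2 htmem.1)
        simp [hh, Set.indicator_of_mem htE]
      have int1 : IntervalIntegrable h volume a a' := by
        apply hinth.mono_set
        rw [uIcc_of_le haa', uIcc_of_le hab]
        exact Icc_subset_Icc le_rfl (le_trans ha'b' hb'b)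
      have int2 : IntervalIntegrable h volume a' b' := by
        apply hinth.mono_set
        rw [uIcc_of_le ha'b', uIcc_of_le hab]
        exact Icc_subset_Icc haa' hb'b
      have int3 : IntervalIntegrable h volume b' b := by
        apply hinth.mono_set
        rw [uIcc_of_le hb'b, uIcc_of_le hab]
        exact Icc_subset_Icc (le_trans haa' ha'b') le_rfl
      have hsplit : ∫ t in a..b, h t =
          (∫ t in a..a', h t) + (∫ t in a'..b', h t) + (∫ t in b'..b, h t) := by
        rw [intervalIntegral.integral_add_adjacent_intervals int1 int2,
          intervalIntegral.integral_add_adjacent_intervals (int1.trans int2) int3]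
      have hmid : 0 ≤ ∫ t in a'..b', h t :=
        intervalIntegral.integral_nonneg ha'b' (fun t _ => hnonneg t)
      have key : ‖f (γ b) - f (γ a)‖ ≤ (∫ t in a..a', h t) + ∫ t in b'..b, h t := by
        calc ‖f (γ b) - f (γ a)‖ ≤ ‖f (γ b) - f (γ b')‖ + ‖f (γ b') - f (γ a)‖ :=
              norm_sub_le_norm_sub_add_norm_sub _ _ _
          _ = ‖f (γ a') - f (γ a)‖ + ‖f (γ b) - f (γ b')‖ := by
              rw [fcb', ← fca']; ring
          _ ≤ (∫ t in a..a', g (γ t)) + ∫ t in b'..b, g (γ t) :=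
              add_le_add (hg a a' haa' γ hγ) (hg b' b hb'b γ hγ)
          _ = (∫ t in a..a', h t) + ∫ t in b'..b, h t := by rw [eq1, eq2]
      calc ‖f (γ b) - f (γ a)‖ ≤ (∫ t in a..a', h t) + ∫ t in b'..b, h t := key
        _ ≤ (∫ t in a..a', h t) + (∫ t in a'..b', h t) + (∫ t in b'..b, h t) := by
            linarith
        _ = ∫ t in a..b, h t := hsplit.symm
    · have heq : EqOn h (fun t => g (γ t)) (Set.uIcc a b) := by
        intro t ht
        rw [Set.uIcc_of_le hab] at ht
        have htE : γ t ∈ Eᶜ := fun hmem => hSne ⟨t, ht, hmem⟩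
        simp [hh, Set.indicator_of_mem htE]
      rw [intervalIntegral.integral_congr heq]
      exact hg a b hab γ hγ
  · have h0 : ∫ t in a..b, g (γ t) = 0 := intervalIntegral.integral_undef hint
    calc ‖f (γ b) - f (γ a)‖ ≤ ∫ t in a..b, g (γ t) := hg a b hab γ hγ
      _ = 0 := h0
      _ ≤ ∫ t in a..b, h t := intervalIntegral.integral_nonneg hab (fun t _ => hnonneg t)
end

section
/- Let a : [0,∞) → ℝ satisfy ∫₀ˢ |a'(t)| dt = ∞ for every s > 0 (with a differentiable on (0,1)). Let Γ = {(x, a(|x|)) : x ∈ Bⁿ(0,1)} ⊂ ℝ^{n+1} be the graph of a(|x|). Then the point P = (0, a(0)) cannot be joined to any other point of Γ by a curve of finite length lying in Γ. -/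
open Set MeasureTheory Metric

lemma my_lintegral_deriv_le {F : ℝ → ℝ} (hF : Monotone F) {c d d' : ℝ} (hdd' : d < d') :
    ∫⁻ x in Set.Ioo c d, ENNReal.ofReal (deriv F x) ≤ ENNReal.ofReal (F d' - F c) := by
  set μ := hF.stieltjesFunction.measure with hμ
  have h1 : ∀ᵐ x, HasDerivAt F ((μ.rnDeriv volume x).toReal) x := hF.ae_hasDerivAt
  have h2 : ∀ᵐ x ∂(volume : Measure ℝ), μ.rnDeriv volume x < ⊤ := μ.rnDeriv_lt_top volume
  have heq : ∀ᵐ x ∂(volume : Measure ℝ),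
      ENNReal.ofReal (deriv F x) = μ.rnDeriv volume x := by
    filter_upwards [h1, h2] with x hx h'x
    rw [hx.deriv, ENNReal.ofReal_toReal h'x.ne]
  calc ∫⁻ x in Set.Ioo c d, ENNReal.ofReal (deriv F x)
      = ∫⁻ x in Set.Ioo c d, μ.rnDeriv volume x :=
        lintegral_congr_ae (ae_restrict_of_ae heq)
    _ ≤ μ (Set.Ioo c d) := Measure.setLIntegral_rnDeriv_le _
    _ ≤ ENNReal.ofReal (F d' - F c) := by
        rw [hμ, StieltjesFunction.measure_Ioo]
        apply ENNReal.ofReal_le_ofReal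
        have e1 : Function.leftLim (hF.stieltjesFunction) d ≤ hF.stieltjesFunction d :=
          (hF.stieltjesFunction).mono.leftLim_le le_rfl
        have e2 : hF.stieltjesFunction d ≤ F d' := by
          rw [hF.stieltjesFunction_eq]; exact hF.rightLim_le hdd'
        have e3 : F c ≤ hF.stieltjesFunction c := by
          rw [hF.stieltjesFunction_eq]; exact hF.le_rightLim le_rfl
        linarith

lemma my_abs_deriv_lintegral {f P Q : ℝ → ℝ} (hP : Monotone P) (hQ : Monotone Q) {c d : ℝ}
    (hfeq : ∀ x ∈ Set.Ioo c d, f x = P x - Q x) {d' : ℝ} (hdd' : d < d') :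
    ∫⁻ x in Set.Ioo c d, ENNReal.ofReal |deriv f x| ≤
      ENNReal.ofReal (P d' - P c) + ENNReal.ofReal (Q d' - Q c) := by
  have key : ∀ᵐ x ∂(volume.restrict (Set.Ioo c d)),
      ENNReal.ofReal |deriv f x| ≤ ENNReal.ofReal (deriv P x) + ENNReal.ofReal (deriv Q x) := by
    rw [ae_restrict_iff' measurableSet_Ioo]
    filter_upwards [hP.ae_hasDerivAt, hQ.ae_hasDerivAt] with x hPx hQx hx
    have hev : f =ᶠ[nhds x] (fun y => P y - Q y) :=
      Filter.eventuallyEq_of_mem (isOpen_Ioo.mem_nhds hx) hfeq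
    have hfd : HasDerivAt f _ x := (hPx.sub hQx).congr_of_eventuallyEq hev
    rw [hfd.deriv, hPx.deriv, hQx.deriv]
    set pp := ((hP.stieltjesFunction.measure.rnDeriv volume x).toReal) with hpp
    set qq := ((hQ.stieltjesFunction.measure.rnDeriv volume x).toReal) with hqq
    have hp0 : 0 ≤ pp := ENNReal.toReal_nonneg
    have hq0 : 0 ≤ qq := ENNReal.toReal_nonneg
    calc ENNReal.ofReal |pp - qq| ≤ ENNReal.ofReal (pp + qq) := by
          apply ENNReal.ofReal_le_ofReal
          rw [abs_sub_le_iff]; constructor <;> linarith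
      _ = ENNReal.ofReal pp + ENNReal.ofReal qq := ENNReal.ofReal_add hp0 hq0
  calc ∫⁻ x in Set.Ioo c d, ENNReal.ofReal |deriv f x|
      ≤ ∫⁻ x in Set.Ioo c d, (ENNReal.ofReal (deriv P x) + ENNReal.ofReal (deriv Q x)) :=
        lintegral_mono_ae key
    _ = (∫⁻ x in Set.Ioo c d, ENNReal.ofReal (deriv P x))
        + ∫⁻ x in Set.Ioo c d, ENNReal.ofReal (deriv Q x) :=
        lintegral_add_left ((measurable_deriv P).ennreal_ofReal) _
    _ ≤ ENNReal.ofReal (P d' - P c) + ENNReal.ofReal (Q d' - Q c) :=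
        add_le_add (my_lintegral_deriv_le hP hdd') (my_lintegral_deriv_le hQ hdd')

theorem stmt_19 (n : ℕ) (a : ℝ → ℝ)
    (ha_diff : DifferentiableOn ℝ a (Set.Ioo 0 1))
    (ha_int : ∀ s : ℝ, 0 < s → ∫⁻ t in Set.Ioo 0 s, ENNReal.ofReal |deriv a t| = ⊤)
    (Γ : Set (EuclideanSpace ℝ (Fin n) × ℝ))
    (hΓ : Γ = {q | ∃ x ∈ Metric.ball (0 : EuclideanSpace ℝ (Fin n)) 1, q = (x, a ‖x‖)})
    (P : EuclideanSpace ℝ (Fin n) × ℝ) (hP : P = (0, a 0)) :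
    ∀ Q ∈ Γ, Q ≠ P →
      ∀ γ : ℝ → EuclideanSpace ℝ (Fin n) × ℝ,
        ContinuousOn γ (Set.Icc 0 1) → (∀ t ∈ Set.Icc (0 : ℝ) 1, γ t ∈ Γ) →
        γ 0 = P → γ 1 = Q →
        eVariationOn γ (Set.Icc 0 1) = ⊤ := by
  intro Q hQ hQP γ hγcont hγmem hγ0 hγ1
  by_contra hV
  set V := eVariationOn γ (Set.Icc 0 1) with hVdef
  rw [hΓ] at hQ
  simp only [Set.mem_setOf_eq] at hQ
  obtain ⟨x₀, hx₀ball, hQeq⟩ := hQ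
  set s := ‖x₀‖ with hs
  have hs_pos : 0 < s := by
    rcases eq_or_ne x₀ 0 with h | h
    · exact absurd (by rw [hQeq, hP, hs, h]; simp) hQP
    · exact norm_pos_iff.mpr h
  set r : ℝ → ℝ := fun t => ‖(γ t).1‖ with hr
  set b : ℝ → ℝ := fun t => (γ t).2 with hbdef
  have hba : ∀ t ∈ Set.Icc (0:ℝ) 1, b t = a (r t) := by
    intro t ht
    have := hγmem t ht
    rw [hΓ] at this
    obtain ⟨x, hx, hxe⟩ := this
    simp [hbdef, hr, hxe]
  have hr0 : r 0 = 0 := by simp [hr, hγ0, hP]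
  have hr1 : r 1 = s := by simp [hr, hγ1, hQeq, hs]
  have hrc : ContinuousOn r (Set.Icc 0 1) :=
    (continuous_norm.comp continuous_fst).comp_continuousOn hγcont
  have hbV : eVariationOn b (Set.Icc 0 1) ≤ V := by
    have := (LipschitzWith.prod_snd.lipschitzOnWith
        (s := (Set.univ : Set (EuclideanSpace ℝ (Fin n) × ℝ)))).comp_eVariationOn_le
        (Set.mapsTo_univ γ (Set.Icc (0:ℝ) 1))
    simp at this; exact this
  -- Step 1: variation of a on [ε, s] is at most V
  have hvar : ∀ ε, ε ∈ Set.Ioo 0 s → eVariationOn a (Set.Icc ε s) ≤ V := by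
    intro ε hε
    apply iSup_le
    rintro ⟨m, u, hu, us⟩
    set K : ℕ → Set ℝ := fun i => Set.Icc (0:ℝ) 1 ∩ r ⁻¹' {u i} with hK
    have hKcl : ∀ i, IsClosed (K i) := fun i =>
      hrc.preimage_isClosed_of_isClosed isClosed_Icc isClosed_singleton
    have hKcp : ∀ i, IsCompact (K i) := fun i =>
      isCompact_Icc.of_isClosed_subset (hKcl i) Set.inter_subset_left
    have hKne : ∀ i, (K i).Nonempty := by
      intro i
      have hui : u i ∈ Set.Icc (r 0) (r 1) := by
        rw [hr0, hr1]
        exact ⟨le_of_lt (lt_of_lt_of_le hε.1 (us i).1), (us i).2⟩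
      obtain ⟨t, ht, hrt⟩ := intermediate_value_Icc zero_le_one hrc hui
      exact ⟨t, ht, hrt⟩
    set T : ℕ → ℝ := fun i => sInf (K i) with hT
    have hTK : ∀ i, T i ∈ K i := fun i => (hKcp i).sInf_mem (hKne i)
    have hTmem : ∀ i, T i ∈ Set.Icc (0:ℝ) 1 := fun i => (hTK i).1
    have hrT : ∀ i, r (T i) = u i := fun i => (hTK i).2
    have hTmono : Monotone T := by
      intro i j hij
      have h1 : u i ∈ Set.Icc (r 0) (r (T j)) := by
        rw [hr0, hrT j]
        exact ⟨le_of_lt (lt_of_lt_of_le hε.1 (us i).1), hu hij⟩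
      obtain ⟨t, ht, hrt⟩ := intermediate_value_Icc (hTmem j).1
        (hrc.mono (Set.Icc_subset_Icc le_rfl (hTmem j).2)) h1
      have htK : t ∈ K i := ⟨⟨ht.1, le_trans ht.2 (hTmem j).2⟩, hrt⟩
      exact le_trans (csInf_le (hKcp i).bddBelow htK) ht.2
    calc ∑ i ∈ Finset.range m, edist (a (u (i+1))) (a (u i))
        = ∑ i ∈ Finset.range m, edist (b (T (i+1))) (b (T i)) := by
          refine Finset.sum_congr rfl fun i _ => ?_
          rw [hba _ (hTmem _), hba _ (hTmem _), hrT, hrT]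
      _ ≤ eVariationOn b (Set.Icc 0 1) := eVariationOn.sum_le (f := b) (n := m) hTmono hTmem
      _ ≤ V := hbV
  -- Step 2: uniform bound on the integral over (ε, s)
  have hlint : ∀ ε, ε ∈ Set.Ioo 0 s →
      ∫⁻ t in Set.Ioo ε s, ENNReal.ofReal |deriv a t| ≤ V + (V + V) := by
    intro ε hε
    set I := Set.Icc ε s with hI
    set W := eVariationOn a I with hWdef
    have hWV : W ≤ V := hvar ε hε
    have hWne : W ≠ ⊤ := ne_top_of_le_ne_top hV hWV
    have hBV : BoundedVariationOn a I := hWne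
    have hlbv : LocallyBoundedVariationOn a I := hBV.locallyBoundedVariationOn
    have hεI : ε ∈ I := ⟨le_rfl, hε.2.le⟩
    have hsI : s ∈ I := ⟨hε.2.le, le_rfl⟩
    set p := variationOnFromTo a I ε with hpdef
    have hpm : MonotoneOn p I := variationOnFromTo.monotoneOn hlbv hεI
    have hqm : MonotoneOn (p - a) I := variationOnFromTo.sub_self_monotoneOn hlbv hεI
    set cl : ℝ → ℝ := fun x => max ε (min s x) with hcl
    have hclm : Monotone cl := monotone_const.max (monotone_const.min monotone_id)
    have hclI : ∀ x, cl x ∈ I := fun x => ⟨le_max_left _ _, max_le hε.2.le (min_le_left _ _)⟩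
    have hclid : ∀ x ∈ Set.Ioo ε s, cl x = x := by
      intro x hx
      simp [hcl, min_eq_right hx.2.le, max_eq_right hx.1.le]
    have hcls : cl (s+1) = s := by
      simp [hcl, min_eq_left (by linarith : s ≤ s + 1), max_eq_right hε.2.le]
    have hclε : cl ε = ε := by
      simp [hcl, min_eq_right hε.2.le]
    have hPm : Monotone (fun x => p (cl x)) := fun x y hxy => hpm (hclI x) (hclI y) (hclm hxy)
    have hQm : Monotone (fun x => (p - a) (cl x)) :=
      fun x y hxy => hqm (hclI x) (hclI y) (hclm hxy)
    have hfeq : ∀ x ∈ Set.Ioo ε s, a x = (fun x => p (cl x)) x - (fun x => (p - a) (cl x)) x := by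
      intro x hx
      simp [hclid x hx]
    have hps : p s = W.toReal := by
      rw [hpdef, variationOnFromTo.eq_of_le a I hε.2.le]
      congr 1
      rw [hWdef, hI, Set.inter_self]
    have hpε : p ε = 0 := variationOnFromTo.self a I ε
    have haεs : a ε - a s ≤ W.toReal := by
      have h := hBV.dist_le hεI hsI
      rw [Real.dist_eq] at h
      calc a ε - a s ≤ |a ε - a s| := le_abs_self _
        _ ≤ W.toReal := h
    have key := my_abs_deriv_lintegral hPm hQm hfeq (lt_add_one s)
    have h1 : ENNReal.ofReal ((fun x => p (cl x)) (s+1) - (fun x => p (cl x)) ε) = W := by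
      simp only [hcls, hclε, hps, hpε, sub_zero]
      exact ENNReal.ofReal_toReal hWne
    have h2 : ENNReal.ofReal ((fun x => (p - a) (cl x)) (s+1) - (fun x => (p - a) (cl x)) ε)
        ≤ W + W := by
      have he : (fun x => (p - a) (cl x)) (s+1) - (fun x => (p - a) (cl x)) ε
          = W.toReal - a s - (0 - a ε) := by
        simp only [hcls, hclε, Pi.sub_apply, hps, hpε]
      calc ENNReal.ofReal ((fun x => (p - a) (cl x)) (s+1) - (fun x => (p - a) (cl x)) ε)
          ≤ ENNReal.ofReal (W.toReal + W.toReal) := by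
            apply ENNReal.ofReal_le_ofReal
            rw [he]; linarith
        _ ≤ ENNReal.ofReal W.toReal + ENNReal.ofReal W.toReal := ENNReal.ofReal_add_le
        _ = W + W := by rw [ENNReal.ofReal_toReal hWne]
    calc ∫⁻ t in Set.Ioo ε s, ENNReal.ofReal |deriv a t| ≤ _ := key
      _ ≤ V + (V + V) := by
        rw [h1]
        exact add_le_add hWV (h2.trans (add_le_add hWV hWV))
  -- Step 3: contradiction
  set g : ℝ → ENNReal := fun t => ENNReal.ofReal |deriv a t| with hg
  have hgm : Measurable g := (measurable_deriv a).abs.ennreal_ofReal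
  set ν := volume.withDensity g with hν
  set e : ℕ → ℝ := fun k => s / (k+2) with he
  have hek : ∀ k, e k ∈ Set.Ioo 0 s := by
    intro k
    constructor
    · positivity
    · rw [he]
      rw [div_lt_iff₀ (by positivity)]
      nlinarith [hs_pos, (Nat.cast_nonneg k : (0:ℝ) ≤ k)]
  have hmono : Monotone fun k => Set.Ioo (e k) s := by
    intro k l hkl
    apply Set.Ioo_subset_Ioo _ le_rfl
    apply div_le_div_of_nonneg_left hs_pos.le (by positivity)
    have : (k:ℝ) ≤ l := Nat.cast_le.mpr hkl
    linarith
  have hunion : ⋃ k, Set.Ioo (e k) s = Set.Ioo 0 s := by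
    apply Set.Subset.antisymm
    · exact Set.iUnion_subset fun k => Set.Ioo_subset_Ioo (hek k).1.le le_rfl
    · intro x hx
      obtain ⟨k, hk⟩ := exists_nat_gt (s / x)
      refine Set.mem_iUnion.mpr ⟨k, ?_, hx.2⟩
      rw [he]
      rw [div_lt_iff₀ (by positivity)]
      rw [div_lt_iff₀ hx.1] at hk
      nlinarith [hx.1]
  have hνtop : ν (Set.Ioo 0 s) = ⊤ := by
    rw [hν, withDensity_apply _ measurableSet_Ioo]
    exact ha_int s hs_pos
  have hνle : ν (Set.Ioo 0 s) ≤ V + (V + V) := by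
    rw [← hunion, (hmono.directed_le).measure_iUnion]
    apply iSup_le
    intro k
    rw [hν, withDensity_apply _ measurableSet_Ioo]
    exact hlint (e k) (hek k)
  rw [hνtop] at hνle
  have := top_le_iff.mp hνle
  simp only [ENNReal.add_eq_top] at this
  tauto
end
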